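/- Suppose (Θ̂₁,…,Θ̂_T) is a tuple of positive definite p×p real matrices that minimizes the GFlsL objective G over all tuples of positive definite p×p real matrices, and suppose that for some integers 1 ≤ s < t ≤ T+1 there is a matrix Σ̂ with Θ̂_r = Σ̂ for all s ≤ r ≤ t−1 (the estimator is constant on the block {s,…,t−1}). Then ‖Σ̂ − (1/(t−s))·∑_{r=s}^{t−1} X_r X_rᵀ‖_F ≤ 2λT/(t−s); that is, the common value on the block deviates from the block sample second moment by at most 2λT/(t−s) in Frobenius norm. -/

import Mathlib

open Matrix Finset

/-- Frobenius norm of a real `p × p` matrix. -/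
noncomputable def frob {p : ℕ} (A : Matrix (Fin p) (Fin p) ℝ) : ℝ :=
  Real.sqrt (∑ u, ∑ v, (A u v) ^ 2)

/-- The Group Fused least-squares LASSO (GFlsL) objective, with time indices `t = 1, …, T`. -/
noncomputable def gflsl (p T : ℕ) (X : ℕ → Fin p → ℝ) (lam : ℝ)
    (Θ : ℕ → Matrix (Fin p) (Fin p) ℝ) : ℝ :=
  (1 / (2 * (T : ℝ))) *
      ∑ t ∈ Finset.Icc 1 T,
        ((Θ t)ᵀ * Θ t - (Matrix.vecMulVec (X t) (X t))ᵀ * Θ t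
          - (Θ t)ᵀ * Matrix.vecMulVec (X t) (X t)).trace
    + lam * ∑ t ∈ Finset.Icc 2 T, frob (Θ t - Θ (t - 1))

namespace Stmt4Aux
variable {p : ℕ}

noncomputable def toE (A : Matrix (Fin p) (Fin p) ℝ) : EuclideanSpace ℝ (Fin p × Fin p) :=
  WithLp.toLp 2 (fun uv : Fin p × Fin p => A uv.1 uv.2)

lemma frob_eq_norm (A : Matrix (Fin p) (Fin p) ℝ) : frob A = ‖toE A‖ := by
  rw [EuclideanSpace.norm_eq]
  simp [frob, toE, Fintype.sum_prod_type, Real.norm_eq_abs, sq_abs]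

lemma frob_nonneg (A : Matrix (Fin p) (Fin p) ℝ) : 0 ≤ frob A := Real.sqrt_nonneg _

lemma frob_add_le (A B : Matrix (Fin p) (Fin p) ℝ) : frob (A + B) ≤ frob A + frob B := by
  rw [frob_eq_norm, frob_eq_norm, frob_eq_norm]
  exact norm_add_le (toE A) (toE B)

lemma frob_smul (c : ℝ) (A : Matrix (Fin p) (Fin p) ℝ) : frob (c • A) = |c| * frob A := by
  rw [frob_eq_norm, frob_eq_norm]
  have : toE (c • A) = c • toE A := rfl
  rw [this, norm_smul, Real.norm_eq_abs]

lemma frob_neg (A : Matrix (Fin p) (Fin p) ℝ) : frob (-A) = frob A := by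
  rw [frob_eq_norm, frob_eq_norm]
  have : toE (-A) = -toE A := rfl
  rw [this, norm_neg]

lemma frob_zero : frob (0 : Matrix (Fin p) (Fin p) ℝ) = 0 := by
  simp [frob]

lemma trace_tmul (E M : Matrix (Fin p) (Fin p) ℝ) :
    (Eᵀ * M).trace = ∑ u, ∑ v, E u v * M u v := by
  simp only [Matrix.trace, Matrix.diag, Matrix.mul_apply, Matrix.transpose_apply]
  exact Finset.sum_comm

lemma quad_expand (A S E : Matrix (Fin p) (Fin p) ℝ) (ε : ℝ) :
    ((A + ε • E)ᵀ * (A + ε • E) - Sᵀ * (A + ε • E) - (A + ε • E)ᵀ * S).trace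
    = (Aᵀ * A - Sᵀ * A - Aᵀ * S).trace
      + 2 * ε * (Eᵀ * (A - S)).trace + ε ^ 2 * (Eᵀ * E).trace := by
  have h1 : (Aᵀ * E).trace = (Eᵀ * A).trace := by
    rw [← Matrix.trace_transpose (Aᵀ * E), Matrix.transpose_mul, Matrix.transpose_transpose]
  have h2 : (Sᵀ * E).trace = (Eᵀ * S).trace := by
    rw [← Matrix.trace_transpose (Sᵀ * E), Matrix.transpose_mul, Matrix.transpose_transpose]
  simp only [Matrix.transpose_add, Matrix.transpose_smul, Matrix.add_mul, Matrix.mul_add,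
    Matrix.smul_mul, Matrix.mul_smul, Matrix.mul_sub, Matrix.trace_add, Matrix.trace_sub,
    Matrix.trace_smul, smul_smul, smul_eq_mul]
  linear_combination ε*h1 - ε*h2

lemma quad_homog (A : Matrix (Fin p) (Fin p) ℝ) (c : ℝ) (x : Fin p → ℝ) :
    (c • x) ⬝ᵥ (A *ᵥ (c • x)) = c ^ 2 * (x ⬝ᵥ (A *ᵥ x)) := by
  simp only [dotProduct, Matrix.mulVec, Pi.smul_apply, smul_eq_mul, Finset.mul_sum]
  exact Finset.sum_congr rfl fun u _ => Finset.sum_congr rfl fun v _ => by ring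

lemma quad_cont (A : Matrix (Fin p) (Fin p) ℝ) :
    Continuous (fun x : Fin p → ℝ => x ⬝ᵥ (A *ᵥ x)) := by
  simp only [dotProduct, Matrix.mulVec]
  refine continuous_finset_sum _ fun u _ => (continuous_apply u).mul ?_
  exact continuous_finset_sum _ fun v _ => continuous_const.mul (continuous_apply v)

lemma quad_lower (hp : 1 ≤ p) {A : Matrix (Fin p) (Fin p) ℝ} (hA : A.PosDef) :
    ∃ μ : ℝ, 0 < μ ∧ ∀ x : Fin p → ℝ, μ * ‖x‖ ^ 2 ≤ x ⬝ᵥ (A *ᵥ x) := by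
  haveI : Nonempty (Fin p) := ⟨⟨0, hp⟩⟩
  have hApos : ∀ x : Fin p → ℝ, x ≠ 0 → 0 < x ⬝ᵥ (A *ᵥ x) := by
    intro x hx
    have := hA.dotProduct_mulVec_pos hx
    simpa using this
  have hKc : IsCompact (Metric.sphere (0 : Fin p → ℝ) 1) := isCompact_sphere _ _
  have hKne : (Metric.sphere (0 : Fin p → ℝ) 1).Nonempty := by
    refine ⟨fun _ => 1, ?_⟩
    simp [Metric.mem_sphere, dist_zero_right, pi_norm_const]
  obtain ⟨x₀, hx₀K, hx₀min⟩ := hKc.exists_isMinOn hKne (quad_cont A).continuousOn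
  rw [isMinOn_iff] at hx₀min
  have hx₀norm : ‖x₀‖ = 1 := by simpa [dist_zero_right] using hx₀K
  have hx₀ne : x₀ ≠ 0 := by intro h; rw [h] at hx₀norm; simp at hx₀norm
  refine ⟨x₀ ⬝ᵥ (A *ᵥ x₀), hApos x₀ hx₀ne, fun x => ?_⟩
  by_cases hx : x = 0
  · simp [hx]
  · have hxn : (0:ℝ) < ‖x‖ := norm_pos_iff.mpr hx
    have hy : (‖x‖⁻¹ • x) ∈ Metric.sphere (0 : Fin p → ℝ) 1 := by
      simp [dist_zero_right, norm_smul, abs_of_pos (inv_pos.mpr hxn), inv_mul_cancel₀ hxn.ne']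
    have h1 := hx₀min _ hy
    have h2 : (‖x‖⁻¹ • x) ⬝ᵥ (A *ᵥ (‖x‖⁻¹ • x)) = (‖x‖⁻¹) ^ 2 * (x ⬝ᵥ (A *ᵥ x)) :=
      quad_homog A _ x
    rw [h2] at h1
    have h3 : (x₀ ⬝ᵥ (A *ᵥ x₀)) * ‖x‖ ^ 2 ≤ ((‖x‖⁻¹) ^ 2 * (x ⬝ᵥ (A *ᵥ x))) * ‖x‖ ^ 2 :=
      mul_le_mul_of_nonneg_right h1 (by positivity)
    have h4 : ((‖x‖⁻¹) ^ 2 * (x ⬝ᵥ (A *ᵥ x))) * ‖x‖ ^ 2 = x ⬝ᵥ (A *ᵥ x) := by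
      field_simp
    linarith

lemma quad_bound (E : Matrix (Fin p) (Fin p) ℝ) (x : Fin p → ℝ) :
    |x ⬝ᵥ (E *ᵥ x)| ≤ (∑ u, ∑ v, |E u v|) * ‖x‖ ^ 2 := by
  simp only [dotProduct, Matrix.mulVec]
  calc |∑ u, x u * ∑ v, E u v * x v| ≤ ∑ u, |x u * ∑ v, E u v * x v| :=
        Finset.abs_sum_le_sum_abs _ _
    _ ≤ ∑ u, ∑ v, |E u v| * ‖x‖ ^ 2 := by
        refine Finset.sum_le_sum fun u _ => ?_
        rw [abs_mul]
        calc |x u| * |∑ v, E u v * x v| ≤ |x u| * ∑ v, |E u v * x v| :=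
              mul_le_mul_of_nonneg_left (Finset.abs_sum_le_sum_abs _ _) (abs_nonneg _)
          _ = ∑ v, |x u| * (|E u v| * |x v|) := by
              rw [Finset.mul_sum]; exact Finset.sum_congr rfl fun v _ => by rw [abs_mul]
          _ ≤ ∑ v, |E u v| * ‖x‖ ^ 2 := by
              refine Finset.sum_le_sum fun v _ => ?_
              have h1 : |x u| ≤ ‖x‖ := by
                simpa [Real.norm_eq_abs] using norm_le_pi_norm x u
              have h2 : |x v| ≤ ‖x‖ := by
                simpa [Real.norm_eq_abs] using norm_le_pi_norm x v
              have h0 : (0:ℝ) ≤ ‖x‖ := norm_nonneg _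
              have h3 : |x u| * (|E u v| * |x v|) ≤ ‖x‖ * (|E u v| * ‖x‖) := by gcongr
              have h4 : ‖x‖ * (|E u v| * ‖x‖) = |E u v| * ‖x‖ ^ 2 := by ring
              linarith
    _ = (∑ u, ∑ v, |E u v|) * ‖x‖ ^ 2 := by simp [Finset.sum_mul]

lemma star_dot (M : Matrix (Fin p) (Fin p) ℝ) (x : Fin p → ℝ) :
    dotProduct (star x) (M *ᵥ x) = x ⬝ᵥ (M *ᵥ x) := by
  simp [star]

lemma herm_smul {E : Matrix (Fin p) (Fin p) ℝ} (hE : E.IsHermitian) (c : ℝ) :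
    (c • E).IsHermitian := by
  unfold Matrix.IsHermitian at *
  rw [Matrix.conjTranspose_smul, hE, star_trivial]

lemma posdef_perturb (hp : 1 ≤ p) {A E : Matrix (Fin p) (Fin p) ℝ}
    (hA : A.PosDef) (hE : E.IsHermitian) :
    ∃ ε₀ : ℝ, 0 < ε₀ ∧ ∀ ε : ℝ, 0 < ε → ε ≤ ε₀ → (A + ε • E).PosDef := by
  obtain ⟨μ, hμ, hlow⟩ := quad_lower hp hA
  set C : ℝ := ∑ u, ∑ v, |E u v| with hC
  have hC0 : 0 ≤ C := Finset.sum_nonneg fun u _ => Finset.sum_nonneg fun v _ => abs_nonneg _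
  refine ⟨μ / (2 * (C + 1)), by positivity, fun ε hε hεle => ?_⟩
  refine Matrix.PosDef.of_dotProduct_mulVec_pos (hA.1.add (herm_smul hE ε)) fun x hx => ?_
  rw [star_dot]
  have hxpos : 0 < ‖x‖ := norm_pos_iff.mpr hx
  have hsplit : x ⬝ᵥ ((A + ε • E) *ᵥ x) = x ⬝ᵥ (A *ᵥ x) + ε * (x ⬝ᵥ (E *ᵥ x)) := by
    simp [Matrix.add_mulVec, Matrix.smul_mulVec, dotProduct_add, dotProduct_smul,
      smul_eq_mul]
  rw [hsplit]
  have h1 := hlow x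
  have h2 : -(C * ‖x‖ ^ 2) ≤ x ⬝ᵥ (E *ᵥ x) := (abs_le.mp (quad_bound E x)).1
  have h3 : ε * (-(C * ‖x‖ ^ 2)) ≤ ε * (x ⬝ᵥ (E *ᵥ x)) :=
    mul_le_mul_of_nonneg_left h2 hε.le
  have h4 : ε * C ≤ μ / 2 := by
    have h5 : ε * (C + 1) ≤ μ / (2 * (C + 1)) * (C + 1) :=
      mul_le_mul_of_nonneg_right hεle (by positivity)
    have h6 : μ / (2 * (C + 1)) * (C + 1) = μ / 2 := by
      field_simp
    nlinarith
  nlinarith [mul_le_mul_of_nonneg_right h4 (sq_nonneg ‖x‖), mul_pos hμ (pow_pos hxpos 2)]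

end Stmt4Aux
open Stmt4Aux in
theorem stmt4 (p T : ℕ) (hp : 1 ≤ p) (hT : 1 ≤ T)
    (X : ℕ → Fin p → ℝ) (lam : ℝ) (hlam : 0 < lam)
    (Θhat : ℕ → Matrix (Fin p) (Fin p) ℝ)
    (hPD : ∀ t ∈ Finset.Icc 1 T, (Θhat t).PosDef)
    (hmin : ∀ Θ : ℕ → Matrix (Fin p) (Fin p) ℝ,
      (∀ t ∈ Finset.Icc 1 T, (Θ t).PosDef) →
      gflsl p T X lam Θhat ≤ gflsl p T X lam Θ)
    (s t : ℕ) (hs : 1 ≤ s) (hst : s < t) (ht : t ≤ T + 1)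
    (Sighat : Matrix (Fin p) (Fin p) ℝ)
    (hconst : ∀ r ∈ Finset.Icc s (t - 1), Θhat r = Sighat) :
    frob (Sighat - (1 / ((t : ℝ) - (s : ℝ))) •
        ∑ r ∈ Finset.Icc s (t - 1), Matrix.vecMulVec (X r) (X r))
      ≤ 2 * lam * (T : ℝ) / ((t : ℝ) - (s : ℝ)) := by
  classical
  have hT0 : (0:ℝ) < (T:ℝ) := by exact_mod_cast Nat.lt_of_lt_of_le Nat.zero_lt_one hT
  set B := Finset.Icc s (t - 1) with hB
  set ν : ℝ := (t:ℝ) - (s:ℝ) with hν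
  have hν0 : (0:ℝ) < ν := by
    rw [hν]
    have : (s:ℝ) < (t:ℝ) := by exact_mod_cast hst
    linarith
  set D : Matrix (Fin p) (Fin p) ℝ :=
    Sighat - (1 / ν) • ∑ r ∈ B, Matrix.vecMulVec (X r) (X r) with hDdef
  have hνcard : ((B.card : ℕ) : ℝ) = ν := by
    rw [hB, Nat.card_Icc]
    have h1 : t - 1 + 1 - s = t - s := by omega
    rw [h1, hν, Nat.cast_sub hst.le]
  have hBsub : B ⊆ Finset.Icc 1 T := by
    intro r hr; rw [hB, Finset.mem_Icc] at hr; rw [Finset.mem_Icc]; omega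
  have hsB : s ∈ B := by rw [hB, Finset.mem_Icc]; omega
  have hSigPD : Sighat.PosDef := by
    have h := hPD s (hBsub hsB)
    rwa [hconst s hsB] at h
  have hSigsymm : ∀ u v, Sighat u v = Sighat v u := by
    intro u v
    have h := hSigPD.1
    conv_lhs => rw [← h]
    simp [Matrix.conjTranspose_apply]
  have hDsymm : ∀ u v, D u v = D v u := by
    intro u v
    rw [hDdef]
    simp only [Matrix.sub_apply, Matrix.smul_apply, Matrix.sum_apply, Matrix.vecMulVec_apply,
      smul_eq_mul]
    rw [hSigsymm u v]
    congr 2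
    exact Finset.sum_congr rfl fun r _ => by ring
  have hE : (-D).IsHermitian := by
    ext u v
    simp only [Matrix.conjTranspose_apply, Matrix.neg_apply, star_trivial]
    rw [hDsymm v u]
  obtain ⟨ε₀, hε₀, hpert⟩ := posdef_perturb hp hSigPD hE
  set F : ℝ := frob D with hF
  set F2 : ℝ := ∑ u, ∑ v, (D u v)^2 with hF2
  have hF2nn : 0 ≤ F2 := Finset.sum_nonneg fun u _ => Finset.sum_nonneg fun v _ => sq_nonneg _
  have hFsqrt : F = Real.sqrt F2 := rfl
  have hFsq : F^2 = F2 := by rw [hFsqrt]; exact Real.sq_sqrt hF2nn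
  have hFnn : 0 ≤ F := frob_nonneg D
  have hRHS : 0 < 2 * lam * (T:ℝ) / ν := by positivity
  rcases eq_or_lt_of_le hFnn with hF0 | hFpos
  · linarith
  have hF2pos : 0 < F2 := by nlinarith
  have htrEE : ((-D)ᵀ * (-D)).trace = F2 := by
    rw [trace_tmul, hF2]
    exact Finset.sum_congr rfl fun u _ => Finset.sum_congr rfl fun v _ => by
      simp only [Matrix.neg_apply]; ring
  have htrED : ((-D)ᵀ * D).trace = -F2 := by
    rw [trace_tmul, hF2]
    have h : ∀ u : Fin p, ∑ v, (-D) u v * D u v = -∑ v, (D u v)^2 := fun u => by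
      rw [← Finset.sum_neg_distrib]
      exact Finset.sum_congr rfl fun v _ => by simp only [Matrix.neg_apply]; ring
    rw [Finset.sum_congr rfl (fun u _ => h u), Finset.sum_neg_distrib]
  -- key inequality for all small ε
  have hmainineq : ∀ ε : ℝ, 0 < ε → ε ≤ ε₀ →
      ν/(T:ℝ) * F2 ≤ ε * ν/(2*(T:ℝ)) * F2 + 2*lam*F := by
    intro ε hε hεle
    set Θ' : ℕ → Matrix (Fin p) (Fin p) ℝ :=
      fun r => Θhat r + (if r ∈ B then ε • (-D) else 0) with hΘ'
    have hΘ'def : ∀ r, Θ' r = Θhat r + (if r ∈ B then ε • (-D) else 0) := fun r => rfl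
    have hΘ'B : ∀ r ∈ B, Θ' r = Sighat + ε • (-D) := by
      intro r hr; rw [hΘ'def, if_pos hr, hconst r hr]
    have hΘ'nB : ∀ r, r ∉ B → Θ' r = Θhat r := by
      intro r hr; rw [hΘ'def, if_neg hr, add_zero]
    have hPD' : ∀ r ∈ Finset.Icc 1 T, (Θ' r).PosDef := by
      intro r hr
      by_cases hrB : r ∈ B
      · rw [hΘ'B r hrB]; exact hpert ε hε hεle
      · rw [hΘ'nB r hrB]; exact hPD r hr
    have hle := hmin Θ' hPD'
    unfold gflsl at hle
    have hQpt : ∀ r ∈ Finset.Icc 1 T,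
        ((Θ' r)ᵀ * Θ' r - (Matrix.vecMulVec (X r) (X r))ᵀ * Θ' r
          - (Θ' r)ᵀ * Matrix.vecMulVec (X r) (X r)).trace
        = ((Θhat r)ᵀ * Θhat r - (Matrix.vecMulVec (X r) (X r))ᵀ * Θhat r
          - (Θhat r)ᵀ * Matrix.vecMulVec (X r) (X r)).trace
          + (if r ∈ B then
              2*ε*(((-D)ᵀ * (Sighat - Matrix.vecMulVec (X r) (X r))).trace) + ε^2 * F2
            else 0) := by
      intro r hr
      by_cases hrB : r ∈ B
      · rw [if_pos hrB, hΘ'B r hrB, hconst r hrB, quad_expand, htrEE]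
        ring
      · rw [if_neg hrB, hΘ'nB r hrB, add_zero]
    rw [Finset.sum_congr rfl hQpt, Finset.sum_add_distrib, Finset.sum_ite_mem,
      Finset.inter_eq_right.mpr hBsub] at hle
    have hblock : ∑ r ∈ B,
        (2*ε*(((-D)ᵀ * (Sighat - Matrix.vecMulVec (X r) (X r))).trace) + ε^2 * F2)
        = ν * F2 * (ε^2 - 2*ε) := by
      rw [Finset.sum_add_distrib, Finset.sum_const, ← Finset.mul_sum]
      have hsum1 : ∑ r ∈ B, ((-D)ᵀ * (Sighat - Matrix.vecMulVec (X r) (X r))).trace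
          = ((-D)ᵀ * (∑ r ∈ B, (Sighat - Matrix.vecMulVec (X r) (X r)))).trace := by
        rw [Finset.mul_sum, Matrix.trace_sum]
      have hsum2 : ∑ r ∈ B, (Sighat - Matrix.vecMulVec (X r) (X r)) = ν • D := by
        rw [Finset.sum_sub_distrib, Finset.sum_const, ← Nat.cast_smul_eq_nsmul ℝ, hνcard, hDdef,
          smul_sub, smul_smul, mul_one_div_cancel hν0.ne', one_smul]
      rw [hsum1, hsum2, Matrix.mul_smul, Matrix.trace_smul, htrED, smul_eq_mul, nsmul_eq_mul,
        hνcard]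
      ring
    rw [hblock] at hle
    -- penalty part
    have hppt : ∀ r ∈ Finset.Icc 2 T,
        frob (Θ' r - Θ' (r-1)) ≤ frob (Θhat r - Θhat (r-1))
          + ((if r = s then ε*F else 0) + (if r = t then ε*F else 0)) := by
      intro r hr
      rw [Finset.mem_Icc] at hr
      have hsplit : Θ' r - Θ' (r-1) = (Θhat r - Θhat (r-1))
          + ((if r ∈ B then ε • (-D) else 0) - (if (r-1) ∈ B then ε • (-D) else 0)) := by
        rw [hΘ'def, hΘ'def]; abel
      have hεF : 0 ≤ ε * F := mul_nonneg hε.le hFnn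
      have memB : ∀ k, k ∈ B ↔ (s ≤ k ∧ k ≤ t - 1) := fun k => by rw [hB, Finset.mem_Icc]
      by_cases hb1 : r ∈ B <;> by_cases hb2 : (r-1) ∈ B
      · rw [hsplit, if_pos hb1, if_pos hb2, sub_self, add_zero]
        have h0 : 0 ≤ (if r = s then ε*F else 0) + (if r = t then ε*F else 0) := by positivity
        linarith
      · have hrs : r = s := by rw [memB] at hb1 hb2; omega
        rw [hsplit, if_pos hb1, if_neg hb2, sub_zero]
        calc frob (Θhat r - Θhat (r-1) + ε • (-D))
            ≤ frob (Θhat r - Θhat (r-1)) + frob (ε • (-D)) := frob_add_le _ _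
          _ = frob (Θhat r - Θhat (r-1)) + ε * F := by
              rw [frob_smul, frob_neg, abs_of_pos hε, hF]
          _ ≤ _ := by
              rw [if_pos hrs]
              have h0 : 0 ≤ (if r = t then ε*F else 0) := by positivity
              linarith
      · have hrt : r = t := by rw [memB] at hb1 hb2; omega
        rw [hsplit, if_neg hb1, if_pos hb2, zero_sub]
        calc frob (Θhat r - Θhat (r-1) + -(ε • (-D)))
            ≤ frob (Θhat r - Θhat (r-1)) + frob (-(ε • (-D))) := frob_add_le _ _
          _ = frob (Θhat r - Θhat (r-1)) + ε * F := by
              rw [frob_neg, frob_smul, frob_neg, abs_of_pos hε, hF]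
          _ ≤ _ := by
              have hrns : r ≠ s := by omega
              rw [if_neg hrns, if_pos hrt]
              linarith
      · rw [hsplit, if_neg hb1, if_neg hb2, sub_self, add_zero]
        have hrns : r ≠ s := by
          intro hcon; apply hb1; rw [memB, hcon]; omega
        have hrnt : r ≠ t := by
          intro hcon; apply hb2; rw [memB, hcon]; omega
        rw [if_neg hrns, if_neg hrnt]
        simp
    have hpen : ∑ r ∈ Finset.Icc 2 T, frob (Θ' r - Θ' (r-1))
        ≤ (∑ r ∈ Finset.Icc 2 T, frob (Θhat r - Θhat (r-1))) + 2*(ε*F) := by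
      have h1 : (∑ r ∈ Finset.Icc 2 T, if r = s then ε*F else 0) ≤ ε*F := by
        rw [Finset.sum_ite_eq']
        split_ifs
        · exact le_refl _
        · positivity
      have h2 : (∑ r ∈ Finset.Icc 2 T, if r = t then ε*F else 0) ≤ ε*F := by
        rw [Finset.sum_ite_eq']
        split_ifs
        · exact le_refl _
        · positivity
      calc ∑ r ∈ Finset.Icc 2 T, frob (Θ' r - Θ' (r-1))
          ≤ ∑ r ∈ Finset.Icc 2 T, (frob (Θhat r - Θhat (r-1))
              + ((if r = s then ε*F else 0) + (if r = t then ε*F else 0))) :=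
            Finset.sum_le_sum hppt
        _ = (∑ r ∈ Finset.Icc 2 T, frob (Θhat r - Θhat (r-1)))
            + ((∑ r ∈ Finset.Icc 2 T, if r = s then ε*F else 0)
              + (∑ r ∈ Finset.Icc 2 T, if r = t then ε*F else 0)) := by
            rw [Finset.sum_add_distrib, Finset.sum_add_distrib]
        _ ≤ _ := by linarith
    -- combine
    set Q : ℝ := ∑ r ∈ Finset.Icc 1 T,
      ((Θhat r)ᵀ * Θhat r - (Matrix.vecMulVec (X r) (X r))ᵀ * Θhat r
        - (Θhat r)ᵀ * Matrix.vecMulVec (X r) (X r)).trace with hQ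
    set P : ℝ := ∑ r ∈ Finset.Icc 2 T, frob (Θhat r - Θhat (r-1)) with hP
    set P' : ℝ := ∑ r ∈ Finset.Icc 2 T, frob (Θ' r - Θ' (r-1)) with hP'
    have h7 : lam * P' ≤ lam * (P + 2*(ε*F)) := mul_le_mul_of_nonneg_left hpen hlam.le
    have h8 : 1 / (2*(T:ℝ)) * (Q + ν*F2*(ε^2 - 2*ε))
        = 1/(2*(T:ℝ))*Q + 1/(2*(T:ℝ))*(ν*F2*(ε^2 - 2*ε)) := by ring
    have h9 : lam * (P + 2*(ε*F)) = lam*P + lam*(2*(ε*F)) := by ring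
    have key0 : 0 ≤ 1/(2*(T:ℝ))*(ν*F2*(ε^2 - 2*ε)) + lam*(2*(ε*F)) := by linarith
    have h10 : 1/(2*(T:ℝ))*(ν*F2*(ε^2 - 2*ε)) + lam*(2*(ε*F))
        = ε * (ε * ν/(2*(T:ℝ)) * F2 + 2*lam*F - ν/(T:ℝ) * F2) := by
      field_simp
      ring
    rw [h10] at key0
    have key1 : 0 ≤ ε * ν/(2*(T:ℝ)) * F2 + 2*lam*F - ν/(T:ℝ) * F2 := by
      have := (mul_nonneg_iff_of_pos_left hε).mp key0
      linarith
    linarith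
  -- limit ε → 0
  have hfinal : ν/(T:ℝ) * F2 ≤ 2*lam*F := by
    by_contra hcon
    push_neg at hcon
    obtain ⟨c, hc⟩ : ∃ c : ℝ, c = (ν/(T:ℝ) * F2 - 2*lam*F)/2 := ⟨_, rfl⟩
    have hc0 : 0 < c := by rw [hc]; linarith
    obtain ⟨ε, hεdef⟩ : ∃ ε : ℝ, ε = min ε₀ (c*(2*(T:ℝ))/(ν*F2)) := ⟨_, rfl⟩
    have hεpos : 0 < ε := by
      rw [hεdef]
      exact lt_min hε₀ (div_pos (mul_pos hc0 (by linarith)) (mul_pos hν0 hF2pos))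
    have h := hmainineq ε hεpos (by rw [hεdef]; exact min_le_left _ _)
    have h2 : ε * ν/(2*(T:ℝ)) * F2 ≤ c := by
      have hle2 : ε ≤ c*(2*(T:ℝ))/(ν*F2) := by
        rw [hεdef]; exact min_le_right _ _
      have hXval : (c*(2*(T:ℝ))/(ν*F2)) * (ν/(2*(T:ℝ))*F2) = c := by
        field_simp
      have h3 := mul_le_mul_of_nonneg_right hle2
        (mul_nonneg (div_nonneg hν0.le (by linarith : (0:ℝ) ≤ 2*(T:ℝ))) hF2nn)
      calc ε * ν/(2*(T:ℝ)) * F2 = ε * (ν/(2*(T:ℝ))*F2) := by ring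
        _ ≤ (c*(2*(T:ℝ))/(ν*F2)) * (ν/(2*(T:ℝ))*F2) := h3
        _ = c := hXval
    rw [hc] at h2
    linarith
  -- conclude
  have h1 := mul_le_mul_of_nonneg_right hfinal hT0.le
  have h2 : ν/(T:ℝ) * F2 * (T:ℝ) = ν * F2 := by field_simp
  rw [h2] at h1
  -- h1 : ν * F2 ≤ 2*lam*F*T
  rw [← hFsq] at h1
  have h3 : ν * F ≤ 2*lam*(T:ℝ) := by nlinarith [hFpos, h1]
  rw [le_div_iff₀ hν0]
  linarith
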